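/- Let G be a reduced abelian p-group, t the torsion ideal of End(G), and σ a t-admissible indicator with finite entries. Then the set I = {f ∈ t(σ) : the image G f has finite rank} is a two-sided ideal of t. -/

import Mathlib

/-- The torsion ideal `t` of `End G`, as a set. -/
def tset (p : ℕ) (G : Type*) [AddCommGroup G] : Set (AddMonoid.End G) :=
  {f | ∃ n : ℕ, p ^ n • f = 0}

/-- An indicator with finite entries: a strictly increasing sequence of
natural numbers, possibly ending in a tail of `∞`'s. -/
def IsFinIndicator (σ : ℕ → ℕ∞) : Prop :=
  (∀ i, σ i ≠ ⊤ → σ i < σ (i + 1)) ∧ (∀ i, σ i = ⊤ → σ (i + 1) = ⊤)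

/-- `σ` is `t`-admissible: at every gap (`σ i + 1 < σ (i+1) < ∞`) with
`σ i = k`, the `k`-th Ulm invariant of the `p`-group `t` is nonzero, i.e.
there is `f ∈ p^k t` of order `p` with `f ∉ p^(k+1) t`. -/
def TAdmissible (p : ℕ) (G : Type*) [AddCommGroup G] (σ : ℕ → ℕ∞) : Prop :=
  ∀ i : ℕ, ∀ k : ℕ, σ i = (k : ℕ∞) →
    ((k : ℕ∞) + 1 < σ (i + 1)) → σ (i + 1) ≠ ⊤ →
    ∃ f ∈ tset p G, (∃ g ∈ tset p G, f = p ^ k • g) ∧ p • f = 0 ∧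
      ¬∃ g ∈ tset p G, f = p ^ (k + 1) • g

/-- Membership in `t(σ) = {f ∈ t : ind(f) ≥ σ}`, heights computed in the
`p`-group `t`. -/
def memTsigma (p : ℕ) (G : Type*) [AddCommGroup G] (σ : ℕ → ℕ∞)
    (f : AddMonoid.End G) : Prop :=
  f ∈ tset p G ∧ ∀ i : ℕ,
    (σ i = ⊤ → p ^ i • f = 0) ∧
    ∀ k : ℕ, σ i = (k : ℕ∞) → ∃ g ∈ tset p G, p ^ i • f = p ^ k • g


lemma tset_sub' {p : ℕ} {G : Type*} [AddCommGroup G] {f g : AddMonoid.End G}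
    (hf : f ∈ tset p G) (hg : g ∈ tset p G) : f - g ∈ tset p G := by
  obtain ⟨n, hn⟩ := hf; obtain ⟨m, hm⟩ := hg
  refine ⟨n + m, ?_⟩
  have h1 : p ^ (n + m) • f = 0 := by
    rw [pow_add, mul_comm, mul_smul, hn, nsmul_zero]
  have h2 : p ^ (n + m) • g = 0 := by
    rw [pow_add, mul_smul, hm, nsmul_zero]
  rw [nsmul_sub, h1, h2, sub_zero]

lemma tset_mull {p : ℕ} {G : Type*} [AddCommGroup G] (h : AddMonoid.End G)
    {f : AddMonoid.End G} (hf : f ∈ tset p G) : h * f ∈ tset p G := by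
  obtain ⟨n, hn⟩ := hf
  exact ⟨n, by rw [← mul_smul_comm, hn, mul_zero]⟩

lemma tset_mulr {p : ℕ} {G : Type*} [AddCommGroup G] (h : AddMonoid.End G)
    {f : AddMonoid.End G} (hf : f ∈ tset p G) : f * h ∈ tset p G := by
  obtain ⟨n, hn⟩ := hf
  exact ⟨n, by rw [← smul_mul_assoc, hn, zero_mul]⟩

/-- For a `t`-admissible indicator `σ` with finite entries, the set of
`f ∈ t(σ)` whose image `G f` has finite rank (equivalently, is finite) is a
two-sided ideal of `t`. -/
theorem stmt17 (p : ℕ) (hp : p.Prime) (G : Type*) [AddCommGroup G]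
    (hpG : ∀ a : G, ∃ n : ℕ, p ^ n • a = 0)
    (hred : ∀ H : AddSubgroup G,
      (∀ x ∈ H, ∀ n : ℕ, ∃ y ∈ H, x = p ^ n • y) → H = ⊥)
    (hunb : ∀ n : ℕ, ∃ a : G, p ^ n • a ≠ 0)
    (σ : ℕ → ℕ∞) (hσ : IsFinIndicator σ) (hσa : TAdmissible p G σ) :
    (∀ f g : AddMonoid.End G,
      (memTsigma p G σ f ∧ (Set.range f).Finite) →
      (memTsigma p G σ g ∧ (Set.range g).Finite) →
      memTsigma p G σ (f - g) ∧ (Set.range (f - g)).Finite) ∧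
    (∀ f : AddMonoid.End G, (memTsigma p G σ f ∧ (Set.range f).Finite) →
      ∀ h ∈ tset p G,
        (memTsigma p G σ (h * f) ∧ (Set.range (h * f)).Finite) ∧
        (memTsigma p G σ (f * h) ∧ (Set.range (f * h)).Finite)) := by
  constructor
  · rintro f g ⟨⟨hft, hf⟩, hfin⟩ ⟨⟨hgt, hg⟩, hgin⟩
    refine ⟨⟨tset_sub' hft hgt, fun i => ⟨fun htop => ?_, fun k hk => ?_⟩⟩, ?_⟩
    · rw [nsmul_sub, (hf i).1 htop, (hg i).1 htop, sub_zero]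
    · obtain ⟨g1, hg1t, hg1⟩ := (hf i).2 k hk
      obtain ⟨g2, hg2t, hg2⟩ := (hg i).2 k hk
      exact ⟨g1 - g2, tset_sub' hg1t hg2t, by rw [nsmul_sub, hg1, hg2, nsmul_sub]⟩
    · refine (Set.Finite.image2 (· - ·) hfin hgin).subset ?_
      rintro _ ⟨x, rfl⟩
      exact Set.mem_image2_of_mem ⟨x, rfl⟩ ⟨x, rfl⟩
  · rintro f ⟨⟨hft, hf⟩, hfin⟩ h hh
    constructor
    · refine ⟨⟨tset_mull h hft, fun i => ⟨fun htop => ?_, fun k hk => ?_⟩⟩, ?_⟩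
      · rw [← mul_smul_comm, (hf i).1 htop, mul_zero]
      · obtain ⟨g1, hg1t, hg1⟩ := (hf i).2 k hk
        exact ⟨h * g1, tset_mull h hg1t,
          by rw [← mul_smul_comm, hg1, mul_smul_comm]⟩
      · refine (hfin.image h).subset ?_
        rintro _ ⟨x, rfl⟩
        exact ⟨f x, ⟨x, rfl⟩, rfl⟩
    · refine ⟨⟨tset_mulr h hft, fun i => ⟨fun htop => ?_, fun k hk => ?_⟩⟩, ?_⟩
      · rw [← smul_mul_assoc, (hf i).1 htop, zero_mul]
      · obtain ⟨g1, hg1t, hg1⟩ := (hf i).2 k hk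
        exact ⟨g1 * h, tset_mulr h hg1t,
          by rw [← smul_mul_assoc, hg1, smul_mul_assoc]⟩
      · refine hfin.subset ?_
        rintro _ ⟨x, rfl⟩
        exact ⟨h x, rfl⟩
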